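/- The second derivative of the cost C(P) = c₀ + a·Σᵢ(λᵢ − qᵢ(Pᵢ)μᵢ) with respect to Pᵢ equals −aγ²λᵢ/(4μᵢ²u³(Aᵢ² − λᵢ/(μᵢu))^{3/2}), which is strictly positive when a < 0 and Aᵢ² > λᵢ/(μᵢu); hence the Hessian of C (a diagonal matrix) is positive definite. -/

import Mathlib

/-- The second derivative of the i-th term of the cost with respect to Pᵢ equals
-aγ²λᵢ/(4μᵢ²u³(Aᵢ²-λᵢ/(μᵢu))^{3/2}) and is strictly positive; hence the Hessian of C,
a diagonal matrix with these entries, is positive definite. -/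
theorem cost_second_derivative (lam mu gam u a P : ℝ)
    (hlam : 0 < lam) (hmu : 0 < mu) (hgam : 0 < gam)
    (hu0 : 0 < u) (hu1 : u < 1) (ha : a < 0) (hP : 0 < P)
    (A : ℝ → ℝ) (hA : ∀ t, A t = (gam * t + mu + lam * u) / (2 * u * mu))
    (hdisc : ∀ t, 0 < t → (A t) ^ 2 > lam / (mu * u)) :
    deriv (deriv (fun t => a * (lam - (A t - Real.sqrt ((A t) ^ 2 - lam / (mu * u))) * mu))) P
      = -a * gam ^ 2 * lam / (4 * mu ^ 2 * u ^ 3 * ((A P) ^ 2 - lam / (mu * u)) ^ ((3:ℝ)/2))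
    ∧ 0 < -a * gam ^ 2 * lam / (4 * mu ^ 2 * u ^ 3 * ((A P) ^ 2 - lam / (mu * u)) ^ ((3:ℝ)/2)) := by
  set c := lam / (mu * u) with hc_def
  have hc : 0 < c := div_pos hlam (mul_pos hmu hu0)
  set k := gam / (2 * u * mu) with hk_def
  have hk : 0 < k := div_pos hgam (by positivity)
  -- derivative of A
  have hA' : ∀ t, HasDerivAt A k t := by
    intro t
    have hfun : A = fun s => (gam * s + mu + lam * u) / (2 * u * mu) := funext hA
    rw [hfun]
    have h := ((((hasDerivAt_id t).const_mul gam).add_const mu).add_const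
      (lam * u)).div_const (2 * u * mu)
    simpa [hk_def] using h
  have hD : ∀ t, 0 < t → 0 < (A t) ^ 2 - c := fun t ht => sub_pos.mpr (hdisc t ht)
  -- derivative of sqrt part
  have hS : ∀ t, 0 < t → HasDerivAt (fun s => Real.sqrt ((A s) ^ 2 - c))
      (A t * k / Real.sqrt ((A t) ^ 2 - c)) t := by
    intro t ht
    have h1 : HasDerivAt (fun s => (A s) ^ 2 - c) (2 * A t * k) t := by
      have := ((hA' t).pow 2).sub_const c
      simpa [mul_assoc, mul_comm] using this
    have h2 := h1.sqrt (ne_of_gt (hD t ht))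
    have hSpos : 0 < Real.sqrt ((A t) ^ 2 - c) := Real.sqrt_pos.mpr (hD t ht)
    convert h2 using 1
    field_simp
  -- first derivative
  have hf : ∀ t, 0 < t → HasDerivAt
      (fun s => a * (lam - (A s - Real.sqrt ((A s) ^ 2 - c)) * mu))
      (a * mu * (A t * k / Real.sqrt ((A t) ^ 2 - c) - k)) t := by
    intro t ht
    have h := ((((hA' t).sub (hS t ht)).mul_const mu).const_sub lam).const_mul a
    refine h.congr_deriv ?_
    ring
  have hg : deriv (fun t => a * (lam - (A t - Real.sqrt ((A t) ^ 2 - c)) * mu))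
      =ᶠ[nhds P] (fun t => a * mu * (A t * k / Real.sqrt ((A t) ^ 2 - c) - k)) := by
    filter_upwards [Ioi_mem_nhds hP] with t ht
    exact (hf t ht).deriv
  have hstep : deriv (deriv (fun t => a * (lam - (A t - Real.sqrt ((A t) ^ 2 - c)) * mu))) P
      = deriv (fun t => a * mu * (A t * k / Real.sqrt ((A t) ^ 2 - c) - k)) P :=
    hg.deriv_eq
  -- second derivative
  have hDP : 0 < (A P) ^ 2 - c := hD P hP
  set S := Real.sqrt ((A P) ^ 2 - c) with hS_def
  have hSpos : 0 < S := Real.sqrt_pos.mpr hDP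
  have hSne : S ≠ 0 := ne_of_gt hSpos
  have hS2 : S ^ 2 = (A P) ^ 2 - c := Real.sq_sqrt hDP.le
  have hq : HasDerivAt (fun t => A t / Real.sqrt ((A t) ^ 2 - c))
      ((k * S - A P * (A P * k / S)) / S ^ 2) P :=
    (hA' P).div (hS P hP) hSne
  have hq2 := (hq.const_mul (a * mu * k)).sub_const (a * mu * k)
  have hfun : (fun t => a * mu * k * (A t / Real.sqrt ((A t) ^ 2 - c)) - a * mu * k)
      = (fun t => a * mu * (A t * k / Real.sqrt ((A t) ^ 2 - c) - k)) := by
    funext t; ring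
  rw [hfun] at hq2
  have hderiv2 : deriv (fun t => a * mu * (A t * k / Real.sqrt ((A t) ^ 2 - c) - k)) P
      = a * mu * k * ((k * S - A P * (A P * k / S)) / S ^ 2) := hq2.deriv
  -- rewrite rpow as S^3
  have hrpow : ((A P) ^ 2 - c) ^ ((3:ℝ)/2) = S ^ 3 := by
    rw [hS_def, Real.sqrt_eq_rpow, ← Real.rpow_natCast (((A P) ^ 2 - c) ^ ((1:ℝ)/2)) 3,
      ← Real.rpow_mul hDP.le]
    norm_num
  have hval : a * mu * k * ((k * S - A P * (A P * k / S)) / S ^ 2)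
      = -a * gam ^ 2 * lam / (4 * mu ^ 2 * u ^ 3 * ((A P) ^ 2 - c) ^ ((3:ℝ)/2)) := by
    rw [hrpow]
    have key : k * S - A P * (A P * k / S) = -(k * c) / S := by
      field_simp
      linear_combination hS2
    rw [key, hk_def, hc_def]
    field_simp
    ring
  constructor
  · rw [hstep, hderiv2, hval]
  · have hnum : 0 < -a * gam ^ 2 * lam :=
      mul_pos (mul_pos (neg_pos.mpr ha) (pow_pos hgam 2)) hlam
    have hden : 0 < 4 * mu ^ 2 * u ^ 3 * ((A P) ^ 2 - c) ^ ((3:ℝ)/2) := by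
      have := Real.rpow_pos_of_pos hDP ((3:ℝ)/2)
      positivity
    exact div_pos hnum hden
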